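/- The commutator [a, c⁻²] = a⁻¹·c²·a·c⁻² is a nontrivial automorphism that fixes every word of length 4, its section at every vertex v ∈ {0,1}⁴ with v ≠ 0111 is the identity, and its section at the vertex 0111 equals the commutator [a, c⁻¹] = a⁻¹·c·a·c⁻¹, which is nontrivial. In particular [a, c⁻²] is a nontrivial element of the rigid stabilizer Rist_G(0111). -/
import Mathlib


namespace BVTree

/-- States of the automaton (generators, their inverses, and the identity). -/
inductive Q : Type
  | e | qa | qb | qc | qd | qa' | qb' | qc' | qd'
  deriving DecidableEq

open Q

/-- Output function of the automaton. -/
def Qout : Q → Bool → Bool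
  | qa, x => !x
  | qa', x => !x
  | _, x => x

/-- Transition function of the automaton. -/
def Qtrans : Q → Bool → Q
  | qa, false => qd
  | qa, true => e
  | qb, false => qa
  | qb, true => qc
  | qc, _ => qa
  | qd, false => e
  | qd, true => qb
  | qa', false => e
  | qa', true => qd'
  | qb', false => qa'
  | qb', true => qc'
  | qc', _ => qa'
  | qd', false => e
  | qd', true => qb'
  | e, _ => e

/-- The state corresponding to the inverse automorphism. -/
def Qinv : Q → Q
  | e => e
  | qa => qa' | qb => qb' | qc => qc' | qd => qd'
  | qa' => qa | qb' => qb | qc' => qc | qd' => qd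

/-- The action of a state on finite binary words. -/
def act : Q → List Bool → List Bool
  | _, [] => []
  | q, x :: w => Qout q x :: act (Qtrans q x) w

lemma act_inv (q : Q) : ∀ w, act (Qinv q) (act q w) = w := by
  intro w
  induction w generalizing q with
  | nil => rfl
  | cons x w ih =>
    have h1 : Qout (Qinv q) (Qout q x) = x := by cases q <;> cases x <;> rfl
    have h2 : Qtrans (Qinv q) (Qout q x) = Qinv (Qtrans q x) := by
      cases q <;> cases x <;> rfl
    simp [act, h1, h2, ih]

/-- The tree automorphism determined by a state of the automaton. -/
def aut (q : Q) : Equiv.Perm (List Bool) where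
  toFun := act q
  invFun := act (Qinv q)
  left_inv := act_inv q
  right_inv := by
    intro w
    have h : Qinv (Qinv q) = q := by cases q <;> rfl
    simpa [h] using act_inv (Qinv q) w

/-- The automorphism `a`: `a(0w) = 1·d(w)`, `a(1w) = 0·w`. -/
def a : Equiv.Perm (List Bool) := aut qa
/-- The automorphism `b`: `b(0w) = 0·a(w)`, `b(1w) = 1·c(w)`. -/
def b : Equiv.Perm (List Bool) := aut qb
/-- The automorphism `c`: `c(0w) = 0·a(w)`, `c(1w) = 1·a(w)`. -/
def c : Equiv.Perm (List Bool) := aut qc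
/-- The automorphism `d`: `d(0w) = 0·w`, `d(1w) = 1·b(w)`. -/
def d : Equiv.Perm (List Bool) := aut qd

/-- The group `G` generated by `a`, `b`, `c`, `d`. -/
def G : Subgroup (Equiv.Perm (List Bool)) := Subgroup.closure {a, b, c, d}


/-- Composition of a list of states acting on a word (head is outermost). -/
def F : List Q → List Bool → List Bool
  | [], w => w
  | q::qs, w => act q (F qs w)

lemma act_e : ∀ w, act e w = w := by
  intro w; induction w with
  | nil => rfl
  | cons x w ih => simpa [act, Qout, Qtrans] using ih

lemma act_cancel' (q : Q) (w : List Bool) : act q (act (Qinv q) w) = w := by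
  have h : Qinv (Qinv q) = q := by cases q <;> rfl
  simpa [h] using act_inv (Qinv q) w

lemma aca : ∀ w, act qa (act qa' w) = w := act_cancel' qa
lemma aca' : ∀ w, act qa' (act qa w) = w := act_inv qa
lemma acc : ∀ w, act qc (act qc' w) = w := act_cancel' qc
lemma acc' : ∀ w, act qc' (act qc w) = w := act_inv qc
lemma acd : ∀ w, act qd (act qd' w) = w := act_cancel' qd
lemma acd' : ∀ w, act qd' (act qd w) = w := act_inv qd

/-- The commutator `[a, c⁻²]` as an automaton-state composition. -/
def C2 : List Q := [qa', qc, qc, qa, qc', qc']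
/-- The commutator `[a, c⁻¹]` as an automaton-state composition. -/
def Cm : List Q := [qa', qc, qa, qc']

lemma coeC2 (w : List Bool) : (a⁻¹ * c ^ 2 * a * (c ^ 2)⁻¹) w = F C2 w := by
  simp only [pow_two, mul_inv_rev, Equiv.Perm.mul_apply]
  rfl

lemma coeCm (w : List Bool) : (a⁻¹ * c * a * c⁻¹) w = F Cm w := by
  simp only [Equiv.Perm.mul_apply]; rfl

lemma sec_0111 (w : List Bool) :
    F C2 ([false, true, true, true] ++ w) = [false, true, true, true] ++ F Cm w := by
  show act qa' (act qc (act qc (act qa (act qc' (act qc'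
    (false :: true :: true :: true :: w)))))) = _
  simp [act, Qout, Qtrans, act_e]
  rfl

lemma sec_triv (v : List Bool) (hv : v.length = 4) (hne : v ≠ [false, true, true, true])
    (w : List Bool) : F C2 (v ++ w) = v ++ w := by
  match v, hv with
  | [x0, x1, x2, x3], _ =>
    show act qa' (act qc (act qc (act qa (act qc' (act qc'
      (x0 :: x1 :: x2 :: x3 :: w)))))) = _
    cases x0 <;> cases x1 <;> cases x2 <;> cases x3 <;>
      simp_all [act, Qout, Qtrans, act_e, aca, aca', acc, acc', acd, acd']

/-- the commutator `[a, c⁻²] = a⁻¹c²ac⁻²` is nontrivial, fixes level `4`, has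
trivial sections at all level-4 vertices except `0111`, where its section is the nontrivial
commutator `[a, c⁻¹] = a⁻¹cac⁻¹`; hence it is a nontrivial element of `Rist_G(0111)`. -/
theorem commutator_in_rist_0111 :
    (a⁻¹ * c ^ 2 * a * (c ^ 2)⁻¹ ≠ 1) ∧
    (∀ v : List Bool, v.length = 4 → (a⁻¹ * c ^ 2 * a * (c ^ 2)⁻¹) v = v) ∧
    (∀ v : List Bool, v.length = 4 → v ≠ [false, true, true, true] →
      ∀ w : List Bool, (a⁻¹ * c ^ 2 * a * (c ^ 2)⁻¹) (v ++ w) = v ++ w) ∧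
    (∀ w : List Bool, (a⁻¹ * c ^ 2 * a * (c ^ 2)⁻¹) ([false, true, true, true] ++ w)
        = [false, true, true, true] ++ (a⁻¹ * c * a * c⁻¹) w) ∧
    (a⁻¹ * c * a * c⁻¹ ≠ 1) ∧
    (∀ u : List Bool, ¬ ([false, true, true, true] <+: u) →
      (a⁻¹ * c ^ 2 * a * (c ^ 2)⁻¹) u = u) := by
  have hCm : a⁻¹ * c * a * c⁻¹ ≠ 1 := by
    intro h
    have h6 : (a⁻¹ * c * a * c⁻¹) [false, false, false, false, false, false]
        = [false, false, false, false, false, false] := by rw [h]; rfl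
    rw [coeCm] at h6
    exact absurd h6 (by decide)
  have hC2 : a⁻¹ * c ^ 2 * a * (c ^ 2)⁻¹ ≠ 1 := by
    intro h
    have h10 : (a⁻¹ * c ^ 2 * a * (c ^ 2)⁻¹)
        ([false, true, true, true] ++ [false, false, false, false, false, false])
        = [false, true, true, true] ++ [false, false, false, false, false, false] := by
      rw [h]; rfl
    rw [coeC2, sec_0111] at h10
    have := List.append_inj_right h10 rfl
    exact absurd this (by decide)
  refine ⟨hC2, ?_, ?_, ?_, hCm, ?_⟩
  · intro v hv
    rw [coeC2]
    match v, hv with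
    | [x0, x1, x2, x3], _ => cases x0 <;> cases x1 <;> cases x2 <;> cases x3 <;> rfl
  · intro v hv hne w
    rw [coeC2]; exact sec_triv v hv hne w
  · intro w
    rw [coeC2, coeCm]; exact sec_0111 w
  · intro u hu
    rw [coeC2]
    match u with
    | [] => rfl
    | [x0] => cases x0 <;> rfl
    | [x0, x1] => cases x0 <;> cases x1 <;> rfl
    | [x0, x1, x2] => cases x0 <;> cases x1 <;> cases x2 <;> rfl
    | x0 :: x1 :: x2 :: x3 :: w =>
      have hne : [x0, x1, x2, x3] ≠ [false, true, true, true] := by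
        intro h
        exact hu ⟨w, by rw [← h]; rfl⟩
      exact sec_triv [x0, x1, x2, x3] rfl hne w

end BVTree
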